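/- The rational function β(z) = −1728 z/((z² − 5z + 1)³(z² − 13z + 49)) is a Belyi function: for every complex number z with (z² − 5z + 1)(z² − 13z + 49) ≠ 0, if the derivative of β vanishes at z, then β(z) = 0 or β(z) = 1. -/

import Mathlib

/-- The rational function `β(z) = −1728 z/((z² − 5z + 1)³(z² − 13z + 49))` is a Belyi
function: all of its finite critical values lie in `{0, 1}`. -/
theorem belyi_S71_3311 (β : ℂ → ℂ)
    (hβ : ∀ z, β z = -1728 * z /
      ((z ^ 2 - 5 * z + 1) ^ 3 * (z ^ 2 - 13 * z + 49))) :
    ∀ z : ℂ, (z ^ 2 - 5 * z + 1) * (z ^ 2 - 13 * z + 49) ≠ 0 →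
      deriv β z = 0 → β z = 0 ∨ β z = 1 := by
  intro z h hd
  have hp1 : (z ^ 2 - 5 * z + 1) ≠ 0 := fun hc => h (by rw [hc, zero_mul])
  have hp2 : (z ^ 2 - 13 * z + 49) ≠ 0 := fun hc => h (by rw [hc, mul_zero])
  have hDne : (z ^ 2 - 5 * z + 1) ^ 3 * (z ^ 2 - 13 * z + 49) ≠ 0 :=
    mul_ne_zero (pow_ne_zero 3 hp1) hp2
  -- derivatives of the two quadratic factors
  have hp : HasDerivAt (fun w : ℂ => w ^ 2 - 5 * w + 1) (2 * z - 5) z := by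
    have := ((hasDerivAt_pow 2 z).sub ((hasDerivAt_id z).const_mul (5 : ℂ))).add_const 1
    simpa using this
  have hq : HasDerivAt (fun w : ℂ => w ^ 2 - 13 * w + 49) (2 * z - 13) z := by
    have := ((hasDerivAt_pow 2 z).sub ((hasDerivAt_id z).const_mul (13 : ℂ))).add_const 49
    simpa using this
  have hD : HasDerivAt (fun w : ℂ => (w ^ 2 - 5 * w + 1) ^ 3 * (w ^ 2 - 13 * w + 49))
      (3 * (z ^ 2 - 5 * z + 1) ^ 2 * (2 * z - 5) * (z ^ 2 - 13 * z + 49)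
        + (z ^ 2 - 5 * z + 1) ^ 3 * (2 * z - 13)) z := by
    have := (hp.pow 3).mul hq
    convert this using 1 <;> rfl
  have hnum : HasDerivAt (fun w : ℂ => -1728 * w) (-1728) z := by
    simpa using (hasDerivAt_id z).const_mul (-1728 : ℂ)
  have hβfun : β = fun w : ℂ => -1728 * w /
      ((w ^ 2 - 5 * w + 1) ^ 3 * (w ^ 2 - 13 * w + 49)) := funext hβ
  have hβ' : HasDerivAt β
      ((-1728 * ((z ^ 2 - 5 * z + 1) ^ 3 * (z ^ 2 - 13 * z + 49))
        - -1728 * z * (3 * (z ^ 2 - 5 * z + 1) ^ 2 * (2 * z - 5) * (z ^ 2 - 13 * z + 49)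
          + (z ^ 2 - 5 * z + 1) ^ 3 * (2 * z - 13)))
        / ((z ^ 2 - 5 * z + 1) ^ 3 * (z ^ 2 - 13 * z + 49)) ^ 2) z := by
    rw [hβfun]
    exact hnum.div hD hDne
  have hval := hβ'.deriv
  rw [hd] at hval
  have hsq : ((z ^ 2 - 5 * z + 1) ^ 3 * (z ^ 2 - 13 * z + 49)) ^ 2 ≠ 0 := pow_ne_zero 2 hDne
  have E : -1728 * ((z ^ 2 - 5 * z + 1) ^ 3 * (z ^ 2 - 13 * z + 49))
      - -1728 * z * (3 * (z ^ 2 - 5 * z + 1) ^ 2 * (2 * z - 5) * (z ^ 2 - 13 * z + 49)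
        + (z ^ 2 - 5 * z + 1) ^ 3 * (2 * z - 13)) = 0 := by
    have := (div_eq_zero_iff.mp hval.symm)
    rcases this with h' | h'
    · exact h'
    · exact absurd h' hsq
  -- key factorization: numerator = 12096 * (z²-5z+1)² * A
  have hA : (z ^ 2 - 5 * z + 1) ^ 2 * (z ^ 4 - 14 * z ^ 3 + 63 * z ^ 2 - 70 * z - 7) = 0 := by
    linear_combination (1 / 12096 : ℂ) * E
  have hA0 : z ^ 4 - 14 * z ^ 3 + 63 * z ^ 2 - 70 * z - 7 = 0 :=
    (mul_eq_zero.mp hA).resolve_left (pow_ne_zero 2 hp1)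
  -- g + 1728 z = A², so g = -1728 z
  have hDval : (z ^ 2 - 5 * z + 1) ^ 3 * (z ^ 2 - 13 * z + 49) = -1728 * z := by
    linear_combination (z ^ 4 - 14 * z ^ 3 + 63 * z ^ 2 - 70 * z - 7) * hA0
  right
  rw [hβ z, ← hDval, div_self hDne]
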